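/- For any primitive integer vector u in Z^2 (i.e., gcd of coordinates is 1) and any ε > 0, there exists a primitive integer vector v in Z^2 such that the cross product u × v = u₁v₂ - u₂v₁ equals 1 and the angle between u and v is less than ε. -/

import Mathlib

open InnerProductGeometry Real

private lemma aux_inner (a b c d : ℝ) :
    (inner ℝ ((WithLp.equiv 2 (Fin 2 → ℝ)).symm ![a,b] : EuclideanSpace ℝ (Fin 2))
      ((WithLp.equiv 2 (Fin 2 → ℝ)).symm ![c,d]) : ℝ) = a*c + b*d := by
  simp [PiLp.inner_apply, Fin.sum_univ_two]
  ring

/-- For any primitive integer vector `u` in `ℤ²` and any `ε > 0`,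
there is a primitive integer vector `v` with cross product `u × v = 1` and
angle between `u` and `v` less than `ε`. -/
theorem stmt_0 (u : ℤ × ℤ) (hu : Int.gcd u.1 u.2 = 1) (ε : ℝ) (hε : 0 < ε) :
    ∃ v : ℤ × ℤ, Int.gcd v.1 v.2 = 1 ∧ u.1 * v.2 - u.2 * v.1 = 1 ∧
      InnerProductGeometry.angle
        ((WithLp.equiv 2 (Fin 2 → ℝ)).symm ![(u.1 : ℝ), (u.2 : ℝ)] : EuclideanSpace ℝ (Fin 2))
        ((WithLp.equiv 2 (Fin 2 → ℝ)).symm ![(v.1 : ℝ), (v.2 : ℝ)]) < ε := by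
  -- Bezout
  have hbez : u.1 * Int.gcdA u.1 u.2 + u.2 * Int.gcdB u.1 u.2 = 1 := by
    have := Int.gcd_eq_gcd_ab u.1 u.2
    rw [hu] at this
    push_cast at this
    linarith [this]
  set A : ℤ := Int.gcdA u.1 u.2
  set B : ℤ := Int.gcdB u.1 u.2
  -- target angle θ
  set θ : ℝ := min ε π / 2 with hθdef
  have hπ : (0:ℝ) < π := Real.pi_pos
  have hθpos : 0 < θ := by positivity
  have hθlt : θ < ε := by
    have : min ε π ≤ ε := min_le_left _ _
    linarith
  have hθle : θ ≤ π / 2 := by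
    have : min ε π ≤ π := min_le_right _ _
    linarith
  have hsinθ : 0 < Real.sin θ := Real.sin_pos_of_pos_of_lt_pi hθpos (by linarith)
  -- choose n
  set c : ℤ := u.1 * (-B) + u.2 * A with hc
  obtain ⟨n, hn⟩ := exists_int_gt (max (1 / Real.sin θ - (c:ℝ)) 0)
  have hn1 : (1:ℝ) / Real.sin θ - (c:ℝ) < n := lt_of_le_of_lt (le_max_left _ _) hn
  have hn2 : (0:ℝ) < n := lt_of_le_of_lt (le_max_right _ _) hn
  set v : ℤ × ℤ := (-B + n * u.1, A + n * u.2) with hv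
  have hcross : u.1 * v.2 - u.2 * v.1 = 1 := by
    simp only [hv]
    linear_combination hbez
  have hgcd : Int.gcd v.1 v.2 = 1 := by
    have hd : (Int.gcd v.1 v.2 : ℤ) ∣ 1 := by
      rw [← hcross]
      exact dvd_sub (Dvd.dvd.mul_left (Int.gcd_dvd_right _ _) _)
        (Dvd.dvd.mul_left (Int.gcd_dvd_left _ _) _)
    have := Int.eq_one_of_dvd_one (by positivity) hd
    exact_mod_cast this
  refine ⟨v, hgcd, hcross, ?_⟩
  set U : EuclideanSpace ℝ (Fin 2) := (WithLp.equiv 2 (Fin 2 → ℝ)).symm ![(u.1 : ℝ), (u.2 : ℝ)]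
  set V : EuclideanSpace ℝ (Fin 2) := (WithLp.equiv 2 (Fin 2 → ℝ)).symm ![(v.1 : ℝ), (v.2 : ℝ)]
  -- inner product value
  have hs : (1:ℤ) ≤ u.1^2 + u.2^2 := by
    rcases eq_or_ne u.1 0 with h1 | h1
    · rcases eq_or_ne u.2 0 with h2 | h2
      · simp [h1, h2, Int.gcd] at hu
      · nlinarith [sq_nonneg u.1, Int.one_le_abs h2, sq_abs u.2]
    · nlinarith [sq_nonneg u.2, Int.one_le_abs h1, sq_abs u.1]
  have hinner : (inner ℝ U V : ℝ) = (c:ℝ) + n * ((u.1:ℝ)^2 + (u.2:ℝ)^2) := by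
    rw [aux_inner]
    simp only [hv, hc]
    push_cast
    ring
  have hnpos : (0:ℝ) < n := hn2
  have hinner_gt : 1 / Real.sin θ < (inner ℝ U V : ℝ) := by
    rw [hinner]
    have hs' : (1:ℝ) ≤ (u.1:ℝ)^2 + (u.2:ℝ)^2 := by exact_mod_cast hs
    nlinarith
  have hinner_pos : (0:ℝ) < (inner ℝ U V : ℝ) := lt_trans (by positivity) hinner_gt
  have hle : (inner ℝ U V : ℝ) ≤ ‖U‖ * ‖V‖ := real_inner_le_norm U V
  have hP : 1 / Real.sin θ < ‖U‖ * ‖V‖ := lt_of_lt_of_le hinner_gt hle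
  have hPpos : 0 < ‖U‖ * ‖V‖ := lt_trans (by positivity) hP
  -- sine of angle
  have hsin : Real.sin (angle U V) * (‖U‖ * ‖V‖) = 1 := by
    rw [sin_angle_mul_norm_mul_norm]
    have key : (u.1^2+u.2^2)*(v.1^2+v.2^2) - (u.1*v.1+u.2*v.2)^2 = 1 := by
      linear_combination (u.1*v.2 - u.2*v.1 + 1) * hcross
    have h1 : (inner ℝ U U : ℝ) * (inner ℝ V V : ℝ) - (inner ℝ U V : ℝ) * (inner ℝ U V : ℝ) = 1 := by
      simp only [U, V, aux_inner]
      have keyR : ((u.1:ℝ)^2+(u.2:ℝ)^2)*((v.1:ℝ)^2+(v.2:ℝ)^2) - ((u.1:ℝ)*(v.1:ℝ)+(u.2:ℝ)*(v.2:ℝ))^2 = 1 := by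
        exact_mod_cast congrArg (Int.cast : ℤ → ℝ) key
      push_cast at keyR ⊢
      linear_combination keyR
    rw [h1, Real.sqrt_one]
  have hsin_lt : Real.sin (angle U V) < Real.sin θ := by
    have h1 : Real.sin (angle U V) = 1 / (‖U‖ * ‖V‖) := by
      rw [eq_div_iff hPpos.ne']
      linarith [hsin]
    rw [h1]
    rw [div_lt_iff₀ hPpos]
    calc (1:ℝ) = Real.sin θ * (1 / Real.sin θ) := by field_simp
    _ < Real.sin θ * (‖U‖ * ‖V‖) := by
        exact mul_lt_mul_of_pos_left hP hsinθ
  -- angle < π/2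
  have hang_lt : angle U V < π / 2 := by
    have hcos : 0 < Real.cos (angle U V) := by
      rw [cos_angle]
      exact div_pos hinner_pos hPpos
    by_contra h
    push_neg at h
    have : Real.cos (angle U V) ≤ 0 :=
      Real.cos_nonpos_of_pi_div_two_le_of_le h (by linarith [angle_le_pi U V, hπ])
    linarith
  -- conclude
  have : angle U V < θ := by
    by_contra h
    push_neg at h
    have : Real.sin θ ≤ Real.sin (angle U V) := by
      rcases eq_or_lt_of_le h with h' | h'
      · rw [h']
      · exact le_of_lt (Real.sin_lt_sin_of_lt_of_le_pi_div_two (by linarith) (le_of_lt hang_lt) h')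
    linarith
  linarith
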